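/- In Penney's game with Alice playing HHH and Bob playing THH with a fair coin, Bob wins with probability 7/8. -/

import Mathlib

/-- Extend a finite binary string (`true` = heads, `false` = tails) to an
infinite sequence by padding with `false`. -/
def padFalse {i : ℕ} (v : Fin i → Bool) : ℕ → Bool :=
  fun n => if h : n < i then v ⟨n, h⟩ else false

/-- The pattern `w` occurs in the flip sequence `s` (flip `m` is `s (m-1)`)
as a consecutive substring ending at flip `m`. -/
def OccursEndingAt (w : List Bool) (s : ℕ → Bool) (m : ℕ) : Prop :=
  w.length ≤ m ∧ ∀ j : Fin w.length, s (m - w.length + (j : ℕ)) = w.get j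

/-- The first occurrence of `w` in `s` ends exactly at flip `m`. -/
def FirstOccurEndsAt (w : List Bool) (s : ℕ → Bool) (m : ℕ) : Prop :=
  OccursEndingAt w s m ∧ ∀ k < m, ¬ OccursEndingAt w s k

/-- The number of binary strings of length `i` that end with `w` and contain
no other occurrence of `w` (`w`-first-timers of length `i`). -/
noncomputable def firstTimerCount (w : List Bool) (i : ℕ) : ℕ :=
  Nat.card {v : Fin i → Bool // FirstOccurEndsAt w (padFalse v) i}

/-- The probability that `w` first appears at exactly the `i`-th fair coin flip. -/
noncomputable def firstTimeProb (w : List Bool) (i : ℕ) : ℝ :=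
  (firstTimerCount w i : ℝ) / 2 ^ i

/-- The expected number of fair coin flips until `w` first appears. -/
noncomputable def expectedWaitTime (w : List Bool) : ℝ :=
  ∑' i : ℕ, (i : ℝ) * firstTimeProb w i

/-- In Penney's game with Alice's string `A` and Bob's string `B`, the game is
decided for Bob at flip `m`: the first occurrence of `B` ends at flip `m` and
`A` has not occurred ending at any flip `k ≤ m`. -/
def BobWinsBy (A B : List Bool) (s : ℕ → Bool) (m : ℕ) : Prop :=
  FirstOccurEndsAt B s m ∧ ∀ k ≤ m, ¬ OccursEndingAt A s k

/-- The probability, over i.i.d. fair coin flips, that the second player's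
string `B` appears (as a consecutive substring) strictly before the first
player's string `A` does. -/
noncomputable def penneyWinProb (A B : List Bool) : ℝ :=
  ∑' m : ℕ, (Nat.card {v : Fin m → Bool // BobWinsBy A B (padFalse v) m} : ℝ) / 2 ^ m


instance (w : List Bool) (s : ℕ → Bool) (m : ℕ) : Decidable (OccursEndingAt w s m) := by
  unfold OccursEndingAt; infer_instance
instance (w : List Bool) (s : ℕ → Bool) (m : ℕ) : Decidable (FirstOccurEndsAt w s m) := by
  unfold FirstOccurEndsAt; infer_instance
instance (A B : List Bool) (s : ℕ → Bool) (m : ℕ) : Decidable (BobWinsBy A B s m) := by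
  unfold BobWinsBy; infer_instance

lemma padFalse_lt {i : ℕ} (v : Fin i → Bool) {t : ℕ} (h : t < i) :
    padFalse v t = v ⟨t, h⟩ := dif_pos h

lemma occurs_iff (a b c : Bool) (s : ℕ → Bool) (k : ℕ) :
    OccursEndingAt [a,b,c] s k ↔ 3 ≤ k ∧ s (k-3) = a ∧ s (k-2) = b ∧ s (k-1) = c := by
  unfold OccursEndingAt
  constructor
  · rintro ⟨h3, hj⟩
    simp only [List.length] at h3 hj
    refine ⟨h3, ?_, ?_, ?_⟩
    · simpa using hj ⟨0, by norm_num⟩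
    · have := hj ⟨1, by norm_num⟩
      simpa [show k-3+1 = k-2 by omega] using this
    · have := hj ⟨2, by norm_num⟩
      simpa [show k-3+2 = k-1 by omega] using this
  · rintro ⟨h3, h0, h1, h2⟩
    refine ⟨h3, ?_⟩
    intro j
    fin_cases j <;>
      simpa [show k-3+1 = k-2 by omega, show k-3+2 = k-1 by omega] using (by assumption : _)

lemma v_congr {m : ℕ} (v : Fin m → Bool) {a b : ℕ} (ha : a < m) (hb : b < m) (hab : a = b) :
    v ⟨a, ha⟩ = v ⟨b, hb⟩ := by subst hab; rfl

def NoHH {k : ℕ} (u : Fin k → Bool) : Prop :=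
  ∀ i j : Fin k, (j : ℕ) = (i : ℕ) + 1 → ¬(u i = true ∧ u j = true)

noncomputable def Acnt (k : ℕ) : ℕ := Nat.card {u : Fin k → Bool // NoHH u}

lemma bob_iff (n : ℕ) (v : Fin (n+4) → Bool) :
    BobWinsBy [true,true,true] [false,true,true] (padFalse v) (n+4) ↔
      (v ⟨n+1, by omega⟩ = false ∧ v ⟨n+2, by omega⟩ = true ∧ v ⟨n+3, by omega⟩ = true ∧
        NoHH (fun i : Fin n => v ⟨(i:ℕ)+1, by omega⟩)) := by
  constructor
  · rintro ⟨⟨hB, hBfirst⟩, hA⟩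
    rw [occurs_iff] at hB
    obtain ⟨-, hb0, hb1, hb2⟩ := hB
    rw [show n+4-3 = n+1 by omega, padFalse_lt v (show n+1 < n+4 by omega)] at hb0
    rw [show n+4-2 = n+2 by omega, padFalse_lt v (show n+2 < n+4 by omega)] at hb1
    rw [show n+4-1 = n+3 by omega, padFalse_lt v (show n+3 < n+4 by omega)] at hb2
    refine ⟨hb0, hb1, hb2, ?_⟩
    intro i j hji hij
    obtain ⟨hvi, hvj⟩ := hij
    set t := (i : ℕ) with ht
    have hjt : (j : ℕ) = t + 1 := hji
    have htn : t < n := i.isLt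
    by_cases hv : v ⟨t, by omega⟩ = true
    · refine hA (t+3) (by omega) ?_
      rw [occurs_iff]
      refine ⟨by omega, ?_, ?_, ?_⟩
      · rw [show t+3-3 = t by omega, padFalse_lt v (show t < n+4 by omega)]; exact hv
      · rw [show t+3-2 = t+1 by omega, padFalse_lt v (show t+1 < n+4 by omega)]; exact hvi
      · rw [show t+3-1 = t+2 by omega, padFalse_lt v (show t+2 < n+4 by omega)]
        rw [v_congr v _ (show (j:ℕ)+1 < n+4 by omega) (by omega)]
        exact hvj
    · refine hBfirst (t+3) (by omega) ?_
      rw [occurs_iff]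
      refine ⟨by omega, ?_, ?_, ?_⟩
      · rw [show t+3-3 = t by omega, padFalse_lt v (show t < n+4 by omega)]
        exact Bool.not_eq_true _ |>.mp hv
      · rw [show t+3-2 = t+1 by omega, padFalse_lt v (show t+1 < n+4 by omega)]; exact hvi
      · rw [show t+3-1 = t+2 by omega, padFalse_lt v (show t+2 < n+4 by omega)]
        rw [v_congr v _ (show (j:ℕ)+1 < n+4 by omega) (by omega)]
        exact hvj
  · rintro ⟨h1, h2, h3, hno⟩
    have key : ∀ k, 3 ≤ k → k ≤ n+1 → ¬(padFalse v (k-2) = true ∧ padFalse v (k-1) = true) := by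
      intro k hk3 hkn hpair
      obtain ⟨hb, hc⟩ := hpair
      rw [padFalse_lt v (show k-2 < n+4 by omega)] at hb
      rw [padFalse_lt v (show k-1 < n+4 by omega)] at hc
      refine hno ⟨k-3, by omega⟩ ⟨k-2, by omega⟩ (by simp; omega) ⟨?_, ?_⟩
      · simpa [show k-3+1 = k-2 by omega] using hb
      · simpa [show k-2+1 = k-1 by omega] using hc
    refine ⟨⟨?_, ?_⟩, ?_⟩
    · rw [occurs_iff]
      refine ⟨by omega, ?_, ?_, ?_⟩
      · rw [show n+4-3 = n+1 by omega, padFalse_lt v (show n+1 < n+4 by omega)]; exact h1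
      · rw [show n+4-2 = n+2 by omega, padFalse_lt v (show n+2 < n+4 by omega)]; exact h2
      · rw [show n+4-1 = n+3 by omega, padFalse_lt v (show n+3 < n+4 by omega)]; exact h3
    · intro k hk hocc
      rw [occurs_iff] at hocc
      obtain ⟨hk3, ha, hb, hc⟩ := hocc
      rcases Nat.lt_or_ge k (n+2) with h | h
      · exact key k hk3 (by omega) ⟨hb, hc⟩
      · rcases Nat.eq_or_lt_of_le h with h' | h'
        · -- k = n+2 : s (k-1) = v (n+1) = false
          rw [show k-1 = n+1 by omega, padFalse_lt v (show n+1 < n+4 by omega), h1] at hc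
          exact absurd hc (by simp)
        · -- k = n+3 : s (k-2) = v (n+1) = false
          have hk' : k = n+3 := by omega
          rw [show k-2 = n+1 by omega, padFalse_lt v (show n+1 < n+4 by omega), h1] at hb
          exact absurd hb (by simp)
    · intro k hk hocc
      rw [occurs_iff] at hocc
      obtain ⟨hk3, ha, hb, hc⟩ := hocc
      rcases Nat.lt_or_ge k (n+2) with h | h
      · exact key k hk3 (by omega) ⟨hb, hc⟩
      · have hk' : k = n+2 ∨ k = n+3 ∨ k = n+4 := by omega
        rcases hk' with hk' | hk' | hk' <;> subst hk'
        · rw [show n+2-1 = n+1 by omega, padFalse_lt v (show n+1 < n+4 by omega), h1] at hc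
          exact absurd hc (by simp)
        · rw [show n+3-2 = n+1 by omega, padFalse_lt v (show n+1 < n+4 by omega), h1] at hb
          exact absurd hb (by simp)
        · rw [show n+4-3 = n+1 by omega, padFalse_lt v (show n+1 < n+4 by omega), h1] at ha
          exact absurd ha (by simp)

instance (k : ℕ) : DecidablePred (NoHH (k := k)) := fun u => by
  unfold NoHH; infer_instance

lemma Acnt_zero : Acnt 0 = 1 := by
  rw [Acnt, Nat.card_eq_fintype_card]; decide

lemma Acnt_one : Acnt 1 = 2 := by
  rw [Acnt, Nat.card_eq_fintype_card]; decide

-- recurrence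
def gsum (k : ℕ) :
    ({u : Fin (k+1) → Bool // NoHH u} ⊕ {u : Fin k → Bool // NoHH u}) →
      {u : Fin (k+2) → Bool // NoHH u}
  | Sum.inl w => ⟨fun idx => if h : (idx : ℕ) < k+1 then w.1 ⟨idx, h⟩ else false, by
      intro i j hji hp
      obtain ⟨hi, hj⟩ := hp
      dsimp only at hi hj
      by_cases hjk : (j : ℕ) < k + 1
      · have hik : (i : ℕ) < k + 1 := by omega
        rw [dif_pos hik] at hi
        rw [dif_pos hjk] at hj
        exact w.2 ⟨i, hik⟩ ⟨j, hjk⟩ (by simpa using hji) ⟨hi, hj⟩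
      · rw [dif_neg hjk] at hj
        exact absurd hj (by simp)⟩
  | Sum.inr w => ⟨fun idx => if h : (idx : ℕ) < k then w.1 ⟨idx, h⟩ else decide ((idx:ℕ) = k+1), by
      intro i j hji hp
      obtain ⟨hi, hj⟩ := hp
      dsimp only at hi hj
      by_cases hjk : (j : ℕ) < k
      · have hik : (i : ℕ) < k := by omega
        rw [dif_pos hik] at hi
        rw [dif_pos hjk] at hj
        exact w.2 ⟨i, hik⟩ ⟨j, hjk⟩ (by simpa using hji) ⟨hi, hj⟩
      · by_cases hjk1 : (j : ℕ) = k
        · rw [dif_neg hjk] at hj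
          simp [hjk1] at hj
        · -- j = k+1, so i = k, u i = false
          have hjv : (j : ℕ) = k + 1 := by omega
          have hiv : (i : ℕ) = k := by omega
          rw [dif_neg (by omega)] at hi
          simp [hiv] at hi⟩

lemma gsum_bij (k : ℕ) : Function.Bijective (gsum k) := by
  constructor
  · rintro (w₁ | w₁) (w₂ | w₂) h <;> simp only [gsum, Subtype.mk.injEq] at h
    · congr 1
      ext i
      have := congrFun (congrArg Subtype.val h) ⟨i, by omega⟩
      simpa [i.isLt] using this
    · exfalso
      have := congrFun (congrArg Subtype.val h) ⟨k+1, by omega⟩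
      simp at this
    · exfalso
      have := congrFun (congrArg Subtype.val h) ⟨k+1, by omega⟩
      simp at this
    · congr 1
      ext i
      have := congrFun (congrArg Subtype.val h) ⟨i, by omega⟩
      simpa [i.isLt, Nat.lt_irrefl] using this
  · rintro ⟨u, hu⟩
    by_cases hlast : u ⟨k+1, by omega⟩ = true
    · have hk : u ⟨k, by omega⟩ = false := by
        by_contra hk
        exact hu ⟨k, by omega⟩ ⟨k+1, by omega⟩ (by simp) ⟨by simpa using hk, hlast⟩
      refine ⟨Sum.inr ⟨fun i => u ⟨i, by omega⟩, ?_⟩, ?_⟩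
      · intro i j hji hp
        exact hu ⟨i, by omega⟩ ⟨j, by omega⟩ (by simpa using hji) hp
      · simp only [gsum]
        ext idx
        dsimp only
        by_cases h : (idx : ℕ) < k
        · simp [h]
        · rcases (by omega : (idx : ℕ) = k ∨ (idx : ℕ) = k+1) with h' | h'
          · rw [dif_neg h]
            simp only [h']
            rw [show idx = ⟨k, by omega⟩ from Fin.ext h', hk]
            simp
          · rw [dif_neg h]
            simp only [h']
            rw [show idx = ⟨k+1, by omega⟩ from Fin.ext h', hlast]
            simp
    · refine ⟨Sum.inl ⟨fun i => u ⟨i, by omega⟩, ?_⟩, ?_⟩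
      · intro i j hji hp
        exact hu ⟨i, by omega⟩ ⟨j, by omega⟩ (by simpa using hji) hp
      · simp only [gsum]
        ext idx
        dsimp only
        by_cases h : (idx : ℕ) < k + 1
        · simp [h]
        · have h' : (idx : ℕ) = k + 1 := by omega
          rw [dif_neg h]
          rw [show idx = ⟨k+1, by omega⟩ from Fin.ext h']
          simp [Bool.not_eq_true] at hlast
          simp [hlast]

lemma Acnt_rec (k : ℕ) : Acnt (k+2) = Acnt (k+1) + Acnt k := by
  have e := Equiv.ofBijective _ (gsum_bij k)
  rw [Acnt, ← Nat.card_congr e, Nat.card_sum]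
  rfl

lemma card_small (m : ℕ) (hm : m < 3) :
    Nat.card {v : Fin m → Bool // BobWinsBy [true,true,true] [false,true,true] (padFalse v) m} = 0 := by
  have : IsEmpty {v : Fin m → Bool // BobWinsBy [true,true,true] [false,true,true] (padFalse v) m} := by
    constructor
    rintro ⟨v, ⟨⟨⟨h3, -⟩, -⟩, -⟩⟩
    simp only [List.length] at h3
    omega
  exact Nat.card_of_isEmpty

def gbob (n : ℕ) (p : Bool × {w : Fin n → Bool // NoHH w}) :
    {v : Fin (n+4) → Bool // BobWinsBy [true,true,true] [false,true,true] (padFalse v) (n+4)} :=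
  ⟨fun idx => if h0 : (idx : ℕ) = 0 then p.1
    else if h : (idx : ℕ) ≤ n then p.2.1 ⟨(idx : ℕ) - 1, by omega⟩
    else decide ((idx : ℕ) ≠ n+1), by
      rw [bob_iff]
      refine ⟨?_, ?_, ?_, ?_⟩
      · dsimp only; rw [dif_neg (by omega), dif_neg (by omega)]; simp
      · dsimp only; rw [dif_neg (by omega), dif_neg (by omega)]; simp
      · dsimp only; rw [dif_neg (by omega), dif_neg (by omega)]; simp
      · have he : (fun i : Fin n => (fun idx : Fin (n+4) => if h0 : (idx : ℕ) = 0 then p.1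
            else if h : (idx : ℕ) ≤ n then p.2.1 ⟨(idx : ℕ) - 1, by omega⟩
            else decide ((idx : ℕ) ≠ n+1)) ⟨(i:ℕ)+1, by omega⟩) = p.2.1 := by
          funext i
          dsimp only
          rw [dif_neg (by omega), dif_pos (by omega)]
          exact congrArg p.2.1 (Fin.ext (by simp))
        rw [he]
        exact p.2.2⟩

lemma gbob_bij (n : ℕ) : Function.Bijective (gbob n) := by
  constructor
  · rintro ⟨b₁, w₁⟩ ⟨b₂, w₂⟩ h
    simp only [gbob, Subtype.mk.injEq] at h
    have hb : b₁ = b₂ := by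
      have := congrFun h ⟨0, by omega⟩
      simpa using this
    have hw : w₁.1 = w₂.1 := by
      funext i
      have h5 := congrFun h ⟨(i:ℕ)+1, by omega⟩
      dsimp only at h5
      have hc0 : ¬(((⟨(i:ℕ)+1, by omega⟩ : Fin (n+4)) : ℕ) = 0) := by simp
      have hcn : ((⟨(i:ℕ)+1, by omega⟩ : Fin (n+4)) : ℕ) ≤ n := by simp
      rw [dif_neg hc0, dif_neg hc0, dif_pos hcn, dif_pos hcn] at h5
      simpa using h5
    exact Prod.ext hb (Subtype.ext hw)
  · rintro ⟨v, hv⟩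
    rw [bob_iff] at hv
    obtain ⟨h1, h2, h3, hno⟩ := hv
    refine ⟨⟨v 0, ⟨fun i => v ⟨(i:ℕ)+1, by omega⟩, hno⟩⟩, ?_⟩
    apply Subtype.ext
    funext idx
    simp only [gbob]
    by_cases h0 : (idx : ℕ) = 0
    · rw [dif_pos h0]
      exact congrArg v (Fin.ext h0.symm)
    · rw [dif_neg h0]
      by_cases hn : (idx : ℕ) ≤ n
      · rw [dif_pos hn]
        exact congrArg v (Fin.ext (by simp; omega))
      · rw [dif_neg hn]
        rcases (by omega : (idx : ℕ) = n+1 ∨ (idx : ℕ) = n+2 ∨ (idx : ℕ) = n+3) with h' | h' | h'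
        · have hvi : v idx = false := by
            rw [show idx = ⟨n+1, by omega⟩ from Fin.ext h']; exact h1
          rw [hvi]
          simp [h']
        · have hvi : v idx = true := by
            rw [show idx = ⟨n+2, by omega⟩ from Fin.ext h']; exact h2
          rw [hvi]
          simp [h']
        · have hvi : v idx = true := by
            rw [show idx = ⟨n+3, by omega⟩ from Fin.ext h']; exact h3
          rw [hvi]
          simp [h']

lemma card_bob (n : ℕ) :
    Nat.card {v : Fin (n+4) → Bool // BobWinsBy [true,true,true] [false,true,true] (padFalse v) (n+4)}
      = 2 * Acnt n := by
  rw [← Nat.card_congr (Equiv.ofBijective _ (gbob_bij n)), Nat.card_prod, Acnt]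
  congr 1
  simp [Nat.card_eq_fintype_card]

lemma Acnt_bound (k : ℕ) : (Acnt k : ℝ) ≤ 2 * (7/4)^k := by
  induction k using Nat.strong_induction_on with
  | _ k ih =>
    match k with
    | 0 => rw [Acnt_zero]; norm_num
    | 1 => rw [Acnt_one]; norm_num
    | (k+2) =>
      rw [Acnt_rec]
      push_cast
      have h1 := ih (k+1) (by omega)
      have h2 := ih k (by omega)
      have hp : (0:ℝ) < (7/4)^k := by positivity
      calc (Acnt (k+1) : ℝ) + Acnt k ≤ 2 * (7/4)^(k+1) + 2 * (7/4)^k := by linarith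
        _ ≤ 2 * (7/4)^(k+2) := by
            have e1 : (7/4:ℝ)^(k+2) = (7/4)^k * (49/16) := by
              rw [pow_succ, pow_succ]; ring
            have e2 : (7/4:ℝ)^(k+1) = (7/4)^k * (7/4) := pow_succ _ _
            rw [e1, e2]; linarith

lemma Acnt_summable : Summable (fun k => (Acnt k : ℝ) / 2^k) := by
  have hg : Summable (fun k : ℕ => 2 * (7/8:ℝ)^k) :=
    (summable_geometric_of_lt_one (by norm_num) (by norm_num)).mul_left 2
  apply Summable.of_nonneg_of_le (fun k => by positivity) _ hg
  intro k
  rw [div_le_iff₀ (by positivity)]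
  calc (Acnt k : ℝ) ≤ 2 * (7/4)^k := Acnt_bound k
    _ = 2 * (7/8)^k * 2^k := by
        rw [mul_assoc, ← mul_pow]; norm_num

lemma Acnt_tsum : ∑' k, (Acnt k : ℝ) / 2^k = 6 := by
  have hs := Acnt_summable
  have hs1 : Summable (fun k => (Acnt (k+1) : ℝ) / 2^(k+1)) := by
    exact_mod_cast (summable_nat_add_iff 1).2 hs
  have hs2 : Summable (fun k => (Acnt (k+2) : ℝ) / 2^(k+2)) := by
    exact_mod_cast (summable_nat_add_iff 2).2 hs
  set S := ∑' k, (Acnt k : ℝ) / 2^k with hS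
  set S1 := ∑' k, (Acnt (k+1) : ℝ) / 2^(k+1) with hS1
  set S2 := ∑' k, (Acnt (k+2) : ℝ) / 2^(k+2) with hS2
  have e0 : S = 1 + S1 := by
    rw [hS, Summable.tsum_eq_zero_add hs]
    rw [Acnt_zero]
    norm_num
    rfl
  have e1 : S1 = 1 + S2 := by
    rw [hS1, Summable.tsum_eq_zero_add hs1]
    rw [Acnt_one]
    norm_num
    rfl
  have e2 : S2 = (1/2) * S1 + (1/4) * S := by
    have hterm : ∀ k, (Acnt (k+2) : ℝ) / 2^(k+2)
        = (1/2) * ((Acnt (k+1) : ℝ) / 2^(k+1)) + (1/4) * ((Acnt k : ℝ) / 2^k) := by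
      intro k
      rw [Acnt_rec]
      push_cast
      rw [pow_succ, pow_succ]
      ring
    rw [hS2]
    rw [tsum_congr hterm]
    rw [Summable.tsum_add (hs1.mul_left _) (hs.mul_left _), tsum_mul_left, tsum_mul_left]
  linarith

/-- In Penney's game with Alice playing HHH and Bob playing THH with a fair
coin, Bob wins with probability 7/8. -/
theorem penney_HHH_vs_THH :
    penneyWinProb [true, true, true] [false, true, true] = 7 / 8 := by
  unfold penneyWinProb
  set f : ℕ → ℝ := fun m => (Nat.card {v : Fin m → Bool // BobWinsBy [true, true, true] [false, true, true] (padFalse v) m} : ℝ) / 2 ^ m with hf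
  have h0 : f 0 = 0 := by simp only [hf]; rw [card_small 0 (by omega)]; norm_num
  have h1 : f 1 = 0 := by simp only [hf]; rw [card_small 1 (by omega)]; norm_num
  have h2 : f 2 = 0 := by simp only [hf]; rw [card_small 2 (by omega)]; norm_num
  have h3 : f 3 = 1/8 := by
    simp only [hf]
    have hc : Nat.card {v : Fin 3 → Bool // BobWinsBy [true, true, true] [false, true, true] (padFalse v) 3} = 1 := by
      rw [Nat.card_eq_fintype_card]; decide
    rw [hc]
    norm_num
  have h4 : ∀ n, f (n+4) = (1/8) * ((Acnt n : ℝ) / 2^n) := by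
    intro n
    simp only [hf]
    rw [card_bob]
    push_cast
    rw [pow_add]
    ring
  have hs4 : Summable (fun n => f (n+4)) := by
    rw [funext h4]
    exact Acnt_summable.mul_left _
  have hsf : Summable f := (summable_nat_add_iff 4).1 hs4
  have ht4 : ∑' n, f (n+4) = 3/4 := by
    rw [tsum_congr h4, tsum_mul_left, Acnt_tsum]
    norm_num
  calc ∑' m, f m
      = f 0 + (f 1 + (f 2 + (f 3 + ∑' n, f (n+4)))) := by
        rw [Summable.tsum_eq_zero_add hsf,
            Summable.tsum_eq_zero_add ((summable_nat_add_iff 1).2 hsf : Summable fun n => f (n+1)),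
            Summable.tsum_eq_zero_add ((summable_nat_add_iff 2).2 hsf : Summable fun n => f (n+2)),
            Summable.tsum_eq_zero_add ((summable_nat_add_iff 3).2 hsf : Summable fun n => f (n+3))]
    _ = 7/8 := by
        rw [h0, h1, h2, h3, ht4]
        norm_num
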